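/- arXiv:2309.01896 — 2 statements merged into one kernel-verified Lean document; each statement's English description precedes it below -/
import Mathlib

section
/- Let θ be a nonzero 2×2 real matrix. A linear map φ on ℝ × ℝ² of block form φ(a,v) = (εa, aη + Pv), with ε ∈ ℝ, η ∈ ℝ², P ∈ GL(2,ℝ), is an automorphism of the Lie algebra g(θ) if and only if ε ≠ 0 and Pθ = εθP. Moreover, if tr θ ≠ 0 and det θ ≠ 0 then necessarily ε = 1, and if tr θ = 0 and det θ ≠ 0 then ε ∈ {−1, 1}. -/
/-- The bracket of the Lie algebra `g(θ) = ℝ ×_θ ℝ²`. -/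
def gBracket (θ : Matrix (Fin 2) (Fin 2) ℝ) (x y : ℝ × (Fin 2 → ℝ)) : ℝ × (Fin 2 → ℝ) :=
  (0, x.1 • θ.mulVec y.2 - y.1 • θ.mulVec x.2)

lemma mulVec_ext {A B : Matrix (Fin 2) (Fin 2) ℝ}
    (h : ∀ v, A.mulVec v = B.mulVec v) : A = B := by
  ext i j
  have := congrFun (h (Pi.single j 1)) i
  simpa [Matrix.mulVec_single] using this

/-- A block-form linear map `φ(a,v) = (εa, aη + Pv)` with `P` invertible is an automorphism
of `g(θ)` iff `ε ≠ 0` and `Pθ = εθP`; moreover `ε = 1` when `tr θ ≠ 0`, `det θ ≠ 0`, and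
`ε ∈ {−1,1}` when `tr θ = 0`, `det θ ≠ 0`. -/
theorem stmt_1 (θ : Matrix (Fin 2) (Fin 2) ℝ) (hθ : θ ≠ 0)
    (ε : ℝ) (η : Fin 2 → ℝ) (P : Matrix (Fin 2) (Fin 2) ℝ) (hP : IsUnit P.det)
    (φ : ℝ × (Fin 2 → ℝ) → ℝ × (Fin 2 → ℝ))
    (hφ : ∀ (a : ℝ) (v : Fin 2 → ℝ), φ (a, v) = (ε * a, a • η + P.mulVec v)) :
    ((Function.Bijective φ ∧
        ∀ x y : ℝ × (Fin 2 → ℝ), φ (gBracket θ x y) = gBracket θ (φ x) (φ y)) ↔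
      (ε ≠ 0 ∧ P * θ = ε • (θ * P))) ∧
    (θ.trace ≠ 0 → θ.det ≠ 0 → P * θ = ε • (θ * P) → ε = 1) ∧
    (θ.trace = 0 → θ.det ≠ 0 → P * θ = ε • (θ * P) → ε = 1 ∨ ε = -1) := by
  have hPinv : P⁻¹ * P = 1 := Matrix.nonsing_inv_mul P hP
  have hPinv' : P * P⁻¹ = 1 := Matrix.mul_nonsing_inv P hP
  refine ⟨⟨?_, ?_⟩, ?_, ?_⟩
  · rintro ⟨hbij, hbr⟩
    have hε : ε ≠ 0 := by
      intro h0
      obtain ⟨⟨a, v⟩, hx⟩ := hbij.2 (1, 0)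
      rw [hφ] at hx
      have := congrArg Prod.fst hx
      simp [h0] at this
    refine ⟨hε, mulVec_ext fun w => ?_⟩
    have h1 := hbr (1, 0) (0, w)
    simp [gBracket, hφ] at h1
    rw [← Matrix.mulVec_mulVec, Matrix.smul_mulVec, ← Matrix.mulVec_mulVec]
    simpa using h1
  · rintro ⟨hε, h⟩
    have hkey : ∀ w, P.mulVec (θ.mulVec w) = ε • θ.mulVec (P.mulVec w) := by
      intro w
      have := congrArg (fun M => M.mulVec w) h
      rw [Matrix.mulVec_mulVec, Matrix.mulVec_mulVec, ← Matrix.smul_mulVec]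
      exact this
    constructor
    · apply Function.bijective_iff_has_inverse.2
      refine ⟨fun p => (ε⁻¹ * p.1, P⁻¹.mulVec (p.2 - (ε⁻¹ * p.1) • η)), ?_, ?_⟩
      · rintro ⟨a, v⟩
        rw [hφ]
        have ha : ε⁻¹ * (ε * a) = a := by field_simp
        dsimp only
        rw [ha]
        simp only [add_sub_cancel_left, Matrix.mulVec_mulVec, hPinv, Matrix.one_mulVec]
      · rintro ⟨a, v⟩
        rw [hφ]
        ext
        · simp [hε]
        · simp only [Matrix.mulVec_sub, Matrix.mulVec_smul, Matrix.mulVec_mulVec, hPinv',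
            Matrix.one_mulVec, add_sub_cancel]
    · rintro ⟨a, v⟩ ⟨b, w⟩
      simp only [gBracket, hφ, mul_zero, Matrix.mulVec_sub, Matrix.mulVec_smul,
        Matrix.mulVec_add, hkey, smul_add, smul_sub, smul_smul]
      rw [Prod.mk.injEq]
      exact ⟨rfl, by module⟩
  · intro htr _ h
    have hconj : θ = ε • (P⁻¹ * θ * P) := by
      calc θ = P⁻¹ * (P * θ) := by rw [← mul_assoc, hPinv, one_mul]
        _ = ε • (P⁻¹ * θ * P) := by rw [h, Matrix.mul_smul, mul_assoc]
    have := congrArg Matrix.trace hconj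
    rw [Matrix.trace_smul, Matrix.trace_mul_comm, ← mul_assoc, hPinv', one_mul,
      smul_eq_mul] at this
    have h0 : θ.trace * (1 - ε) = 0 := by linear_combination this
    rcases mul_eq_zero.1 h0 with h1 | h2
    · exact absurd h1 htr
    · linarith
  · intro _ hdet h
    have := congrArg Matrix.det h
    rw [Matrix.det_mul, Matrix.det_smul, Matrix.det_mul] at this
    have hPd : P.det ≠ 0 := hP.ne_zero
    rw [Fintype.card_fin] at this
    have h0 : (ε ^ 2 - 1) * (θ.det * P.det) = 0 := by linear_combination -this
    rcases mul_eq_zero.1 h0 with h1 | h2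
    · have h3 : (ε - 1) * (ε + 1) = 0 := by linear_combination h1
      rcases mul_eq_zero.1 h3 with h4 | h5
      · exact Or.inl (by linarith)
      · exact Or.inr (by linarith)
    · exact absurd h2 (mul_ne_zero hdet hPd)
end

section
/- Let ξ ∈ ℝ² and A ∈ gl(2,ℝ) with Aθ = θA. For s ∈ ℝ define φ_s(t,v) = (t, e^{sA} v + Λ^θ_t Λ^A_s ξ). Then {φ_s}_{s∈ℝ} is a one-parameter group of automorphisms of G(θ): each φ_s is a group automorphism of G(θ), φ_0 = id, and φ_{s₁+s₂} = φ_{s₁} ∘ φ_{s₂}. -/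
open NormedSpace

/-- `Λ^M_t w = ∫₀ᵗ e^{uM} w du`. -/
noncomputable def Lam (M : Matrix (Fin 2) (Fin 2) ℝ) (t : ℝ) (w : Fin 2 → ℝ) : Fin 2 → ℝ :=
  ∫ u in (0 : ℝ)..t, (exp (u • M)).mulVec w

/-- The product of `G(θ)`. -/
noncomputable def Gmul (θ : Matrix (Fin 2) (Fin 2) ℝ) (x y : ℝ × (Fin 2 → ℝ)) :
    ℝ × (Fin 2 → ℝ) :=
  (x.1 + y.1, x.2 + (exp (x.1 • θ)).mulVec y.2)

/-- The flow `φ_s(t,v) = (t, e^{sA} v + Λ^θ_t Λ^A_s ξ)`. -/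
noncomputable def flow (θ A : Matrix (Fin 2) (Fin 2) ℝ) (ξ : Fin 2 → ℝ) (s : ℝ)
    (x : ℝ × (Fin 2 → ℝ)) : ℝ × (Fin 2 → ℝ) :=
  (x.1, (exp (s • A)).mulVec x.2 + Lam θ x.1 (Lam A s ξ))

section Aux

attribute [local instance] Matrix.linftyOpNormedRing Matrix.linftyOpNormedAlgebra

lemma aux_cont (M : Matrix (Fin 2) (Fin 2) ℝ) (w : Fin 2 → ℝ) :
    Continuous fun u : ℝ => (exp (u • M)).mulVec w := by
  have h : Continuous fun u : ℝ => exp (u • M) :=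
    exp_continuous.comp (continuous_id.smul continuous_const)
  exact h.matrix_mulVec continuous_const

lemma aux_integrable (M : Matrix (Fin 2) (Fin 2) ℝ) (w : Fin 2 → ℝ) (a b : ℝ) :
    IntervalIntegrable (fun u : ℝ => (exp (u • M)).mulVec w)
      MeasureTheory.volume a b :=
  (aux_cont M w).intervalIntegrable a b

/-- pull a fixed matrix out of the integral -/
lemma mulVec_intervalIntegral (N : Matrix (Fin 2) (Fin 2) ℝ) (f : ℝ → Fin 2 → ℝ)
    (a b : ℝ) (hf : IntervalIntegrable f MeasureTheory.volume a b) :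
    (∫ u in a..b, N.mulVec (f u)) = N.mulVec (∫ u in a..b, f u) := by
  simpa [Matrix.mulVecLin_apply] using
    ((Matrix.mulVecLin N).toContinuousLinearMap).intervalIntegral_comp_comm hf

lemma exp_commute (θ A : Matrix (Fin 2) (Fin 2) ℝ) (hA : A * θ = θ * A) (s u : ℝ) :
    exp (s • A) * exp (u • θ) = exp (u • θ) * exp (s • A) := by
  have h : Commute (s • A) (u • θ) := by
    have : Commute A θ := hA
    exact (this.smul_left s).smul_right u
  exact (h.exp).eq

/-- `e^{sA}` commutes with `Λ^θ_t`. -/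
lemma expA_Lam (θ A : Matrix (Fin 2) (Fin 2) ℝ) (hA : A * θ = θ * A) (s t : ℝ)
    (w : Fin 2 → ℝ) :
    (exp (s • A)).mulVec (Lam θ t w) = Lam θ t ((exp (s • A)).mulVec w) := by
  unfold Lam
  rw [← mulVec_intervalIntegral _ _ _ _ (aux_integrable θ w 0 t)]
  congr 1
  funext u
  rw [Matrix.mulVec_mulVec, Matrix.mulVec_mulVec, exp_commute θ A hA]

/-- cocycle identity for `Λ`. -/
lemma Lam_cocycle (M : Matrix (Fin 2) (Fin 2) ℝ) (s₁ s₂ : ℝ) (w : Fin 2 → ℝ) :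
    Lam M (s₁ + s₂) w = Lam M s₁ w + (exp (s₁ • M)).mulVec (Lam M s₂ w) := by
  unfold Lam
  rw [← intervalIntegral.integral_add_adjacent_intervals (b := s₁)
      (aux_integrable M w 0 s₁) (aux_integrable M w s₁ (s₁ + s₂))]
  congr 1
  have : (∫ u in s₁..s₁ + s₂, (exp (u • M)).mulVec w)
      = ∫ u in (0:ℝ)..s₂, (exp ((u + s₁) • M)).mulVec w := by
    rw [intervalIntegral.integral_comp_add_right (fun u => (exp (u • M)).mulVec w) s₁]
    norm_num [add_comm s₁ s₂]
  rw [this, ← mulVec_intervalIntegral _ _ _ _ (aux_integrable M w 0 s₂)]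
  congr 1
  funext u
  rw [Matrix.mulVec_mulVec]
  rw [add_comm u s₁, add_smul,
    Matrix.exp_add_of_commute _ _ (((Commute.refl M).smul_left s₁).smul_right u)]

lemma Lam_zero_left (M : Matrix (Fin 2) (Fin 2) ℝ) (w : Fin 2 → ℝ) : Lam M 0 w = 0 := by
  simp [Lam]

lemma Lam_zero_right (M : Matrix (Fin 2) (Fin 2) ℝ) (t : ℝ) : Lam M t 0 = 0 := by
  simp [Lam, Matrix.mulVec_zero]

lemma Lam_add (M : Matrix (Fin 2) (Fin 2) ℝ) (t : ℝ) (w₁ w₂ : Fin 2 → ℝ) :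
    Lam M t (w₁ + w₂) = Lam M t w₁ + Lam M t w₂ := by
  unfold Lam
  rw [← intervalIntegral.integral_add (aux_integrable M w₁ 0 t) (aux_integrable M w₂ 0 t)]
  congr 1
  funext u
  rw [Matrix.mulVec_add]

end Aux

/-- `{φ_s}` is a one-parameter group of automorphisms of `G(θ)`. -/
theorem stmt_8 (θ A : Matrix (Fin 2) (Fin 2) ℝ) (ξ : Fin 2 → ℝ) (hA : A * θ = θ * A) :
    (∀ s : ℝ, Function.Bijective (flow θ A ξ s)) ∧
    (∀ (s : ℝ) (x y : ℝ × (Fin 2 → ℝ)),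
        flow θ A ξ s (Gmul θ x y) = Gmul θ (flow θ A ξ s x) (flow θ A ξ s y)) ∧
    flow θ A ξ 0 = id ∧
    (∀ s₁ s₂ : ℝ, flow θ A ξ (s₁ + s₂) = flow θ A ξ s₁ ∘ flow θ A ξ s₂) := by
  have hid : flow θ A ξ 0 = id := by
    funext x
    simp [flow, Lam_zero_left, Lam_zero_right, Matrix.one_mulVec]
  have hcoc : ∀ s₁ s₂ : ℝ, flow θ A ξ (s₁ + s₂) = flow θ A ξ s₁ ∘ flow θ A ξ s₂ := by
    intro s₁ s₂
    funext x
    refine Prod.ext rfl ?_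
    show (exp ((s₁ + s₂) • A)).mulVec x.2 + Lam θ x.1 (Lam A (s₁ + s₂) ξ)
        = (exp (s₁ • A)).mulVec
            ((exp (s₂ • A)).mulVec x.2 + Lam θ x.1 (Lam A s₂ ξ))
          + Lam θ x.1 (Lam A s₁ ξ)
    rw [Matrix.mulVec_add, expA_Lam θ A hA, Lam_cocycle A s₁ s₂ ξ, Lam_add,
      Matrix.mulVec_mulVec, add_smul,
      Matrix.exp_add_of_commute _ _ (((Commute.refl A).smul_left s₁).smul_right s₂)]
    abel
  have hhom : ∀ (s : ℝ) (x y : ℝ × (Fin 2 → ℝ)),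
      flow θ A ξ s (Gmul θ x y) = Gmul θ (flow θ A ξ s x) (flow θ A ξ s y) := by
    intro s x y
    refine Prod.ext rfl ?_
    show (exp (s • A)).mulVec (x.2 + (exp (x.1 • θ)).mulVec y.2)
        + Lam θ (x.1 + y.1) (Lam A s ξ)
        = (exp (s • A)).mulVec x.2 + Lam θ x.1 (Lam A s ξ)
          + (exp (x.1 • θ)).mulVec
              ((exp (s • A)).mulVec y.2 + Lam θ y.1 (Lam A s ξ))
    rw [Lam_cocycle θ x.1 y.1 (Lam A s ξ), Matrix.mulVec_add, Matrix.mulVec_add,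
      Matrix.mulVec_mulVec, Matrix.mulVec_mulVec, exp_commute θ A hA s x.1,
      ← Matrix.mulVec_mulVec]
    abel
  refine ⟨?_, hhom, hid, hcoc⟩
  intro s
  refine Function.bijective_iff_has_inverse.mpr ⟨flow θ A ξ (-s), ?_, ?_⟩
  · intro x
    have : flow θ A ξ (-s) (flow θ A ξ s x) = flow θ A ξ (-s + s) x := by
      rw [hcoc]; rfl
    rw [this, neg_add_cancel, hid]; rfl
  · intro x
    have : flow θ A ξ s (flow θ A ξ (-s) x) = flow θ A ξ (s + -s) x := by
      rw [hcoc]; rfl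
    rw [this, add_neg_cancel, hid]; rfl
end
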